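/- For every polyhedral cone domain Ω ⊆ ℝ^{n+1} there exists a constant B ∈ (0, 1/4) (depending only on Ω) with the following property: for every i ∈ {0, 1, …, n+1}, every x ∈ ∂_iΩ, and every y ∈ ℝ^{n+1} with |y − x| < 2B·dist(x, ∂_{i−1}Ω), one has y ∈ Ω if and only if y − x ∈ T_xΩ. Here dist(x, ∅) is interpreted as +∞. -/

import Mathlib

open scoped RealInnerProductSpace ENNReal NNReal

open Module Finset

variable {E : Type*} [NormedAddCommGroup E] [InnerProductSpace ℝ E] [FiniteDimensional ℝ E]

theorem mw_aux (l : List E) :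
    ∃ (p : ℕ) (w : Fin p → E),
      (∀ q, ∀ a ∈ l, ⟪w q, a⟫ ≤ 0) ∧
      ∀ x : E, (∀ a ∈ l, ⟪x, a⟫ ≤ 0) ↔
        ∃ c : Fin p → ℝ, (∀ q, 0 ≤ c q) ∧ x = ∑ q, c q • w q := by
  classical
  induction l with
  | nil =>
      set d := finrank ℝ E
      obtain b := Module.finBasis ℝ E
      set ww : (Fin d ⊕ Fin d) → E := Sum.elim (fun i => b i) (fun i => -(b i)) with hww
      refine ⟨Fintype.card (Fin d ⊕ Fin d), ww ∘ (Fintype.equivFin _).symm, ?_, ?_⟩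
      · intro q a ha; simp at ha
      · intro x
        constructor
        · intro _
          set cc : (Fin d ⊕ Fin d) → ℝ :=
            Sum.elim (fun i => max (b.repr x i) 0) (fun i => max (-(b.repr x i)) 0) with hcc
          have hx : x = ∑ s, cc s • ww s := by
            rw [Fintype.sum_sum_type]
            simp only [hcc, hww, Sum.elim_inl, Sum.elim_inr, smul_neg]
            rw [← Finset.sum_add_distrib]
            have h3 : ∀ i ∈ Finset.univ, (max (b.repr x i) 0) • b i + -((max (-(b.repr x i)) 0) • b i)
                = b.repr x i • b i := by
              intro i _; rw [← neg_smul, ← add_smul]; congr 1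
              simp only [max_def]; split_ifs <;> linarith
            rw [Finset.sum_congr rfl h3]
            exact (b.sum_repr x).symm
          refine ⟨cc ∘ (Fintype.equivFin _).symm, ?_, ?_⟩
          · intro q; rcases h : (Fintype.equivFin (Fin d ⊕ Fin d)).symm q with i | i <;>
              simp [Function.comp, h, hcc, le_max_right]
          · rw [hx, ← Equiv.sum_comp (Fintype.equivFin (Fin d ⊕ Fin d)).symm
              (fun s => cc s • ww s)]
            rfl
        · intro _ a ha; simp at ha
  | cons a l ih =>
      obtain ⟨p, w, hw, hset⟩ := ih
      set g : Fin p → ℝ := fun q => ⟪w q, a⟫ with hg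
      set ww : (Fin p ⊕ Fin p × Fin p) → E :=
        Sum.elim (fun q => if g q ≤ 0 then w q else 0)
          (fun pq => if 0 < g pq.1 ∧ g pq.2 < 0 then g pq.1 • w pq.2 - g pq.2 • w pq.1 else 0)
        with hwwdef
      -- each generator satisfies all constraints of a :: l
      have h1 : ∀ s, ∀ b ∈ a :: l, ⟪ww s, b⟫ ≤ 0 := by
        rintro (q | ⟨p₁, q₁⟩) b hb
        · simp only [hwwdef, Sum.elim_inl]
          split_ifs with h
          · rcases List.mem_cons.1 hb with rfl | hb'
            · exact h
            · exact hw q b hb'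
          · simp
        · simp only [hwwdef, Sum.elim_inr]
          split_ifs with h
          · rw [inner_sub_left, real_inner_smul_left, real_inner_smul_left]
            rcases List.mem_cons.1 hb with rfl | hb'
            · have e1 : ⟪w q₁, b⟫ = g q₁ := rfl
              have e2 : ⟪w p₁, b⟫ = g p₁ := rfl
              rw [e1, e2]; ring_nf; exact le_of_eq rfl
            · have := hw p₁ b hb'
              have := hw q₁ b hb'
              nlinarith [h.1, h.2]
          · simp
      have main : ∀ x : E, (∀ b ∈ a :: l, ⟪x, b⟫ ≤ 0) ↔
          ∃ c : (Fin p ⊕ Fin p × Fin p) → ℝ, (∀ s, 0 ≤ c s) ∧ x = ∑ s, c s • ww s := by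
        intro x
        constructor
        · intro hx
          obtain ⟨c, hc0, hcx⟩ := (hset x).1 (fun b hb => hx b (List.mem_cons_of_mem _ hb))
          set α := ∑ q, if 0 < g q then c q * g q else 0 with hαdef
          set β := -∑ q, if g q < 0 then c q * g q else 0 with hβdef
          have hα0 : 0 ≤ α := Finset.sum_nonneg fun q _ => by
            split_ifs with h
            · exact mul_nonneg (hc0 q) h.le
            · exact le_refl 0
          have hβ0 : 0 ≤ β := by
            rw [hβdef, neg_nonneg]
            exact Finset.sum_nonpos fun q _ => by
              split_ifs with h
              · exact mul_nonpos_of_nonneg_of_nonpos (hc0 q) h.le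
              · exact le_refl 0
          have hxa : ⟪x, a⟫ = α - β := by
            rw [hcx, sum_inner, hαdef, hβdef, sub_neg_eq_add, ← Finset.sum_add_distrib]
            refine Finset.sum_congr rfl fun q _ => ?_
            rw [real_inner_smul_left]
            have e1 : ⟪w q, a⟫ = g q := rfl
            rw [e1]
            rcases lt_trichotomy (g q) 0 with h | h | h
            · simp [h, not_lt.2 h.le]
            · simp [h]
            · simp [h, not_lt.2 h.le]
          have hαβ : α ≤ β := by
            have := hx a List.mem_cons_self
            linarith [hxa]
          by_cases hb0 : β = 0
          · have hA0 : α = 0 := le_antisymm (hb0 ▸ hαβ) hα0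
            have hczero : ∀ q, 0 < g q → c q = 0 := by
              intro q hq
              have hsum0 : (∑ r, if 0 < g r then c r * g r else 0) = 0 := by
                rw [← hαdef]; exact hA0
              have := (Finset.sum_eq_zero_iff_of_nonneg (fun r (_ : r ∈ Finset.univ) => by
                split_ifs with h
                · exact mul_nonneg (hc0 r) h.le
                · exact le_refl 0)).1 hsum0 q (Finset.mem_univ q)
              rw [if_pos hq] at this
              exact (mul_eq_zero.1 this).resolve_right (ne_of_gt hq)
            refine ⟨Sum.elim (fun q => if g q ≤ 0 then c q else 0) (fun _ => 0), ?_, ?_⟩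
            · rintro (q | pq)
              · simp only [Sum.elim_inl]
                split_ifs
                · exact hc0 q
                · exact le_refl 0
              · simp
            · rw [Fintype.sum_sum_type]
              simp only [Sum.elim_inl, Sum.elim_inr, zero_smul, Finset.sum_const_zero, add_zero]
              rw [hcx]
              refine Finset.sum_congr rfl fun q _ => ?_
              simp only [hwwdef, Sum.elim_inl]
              by_cases h : g q ≤ 0
              · simp [h]
              · simp [h, hczero q (not_le.1 h)]
          · have hbpos : 0 < β := lt_of_le_of_ne hβ0 (Ne.symm hb0)
            set Spos := ∑ q, if 0 < g q then c q • w q else 0 with hSpos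
            set Sneg := ∑ q, if g q < 0 then c q • w q else 0 with hSneg
            set Szer := ∑ q, if g q = 0 then c q • w q else 0 with hSzer
            have hsplit : x = Spos + Sneg + Szer := by
              rw [hcx, hSpos, hSneg, hSzer, ← Finset.sum_add_distrib, ← Finset.sum_add_distrib]
              refine Finset.sum_congr rfl fun q _ => ?_
              rcases lt_trichotomy (g q) 0 with h | h | h
              · simp [h, not_lt.2 h.le, h.ne]
              · simp [h]
              · simp [h, not_lt.2 h.le, h.ne']
            refine ⟨Sum.elim
                (fun q => if g q < 0 then (1 - α / β) * c q else if g q ≤ 0 then c q else 0)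
                (fun pq => if 0 < g pq.1 ∧ g pq.2 < 0 then c pq.1 * c pq.2 / β else 0), ?_, ?_⟩
            · rintro (q | pq)
              · simp only [Sum.elim_inl]
                split_ifs with h h'
                · have hd : α / β ≤ 1 := (div_le_one hbpos).2 hαβ
                  exact mul_nonneg (by linarith) (hc0 q)
                · exact hc0 q
                · exact le_refl 0
              · simp only [Sum.elim_inr]
                split_ifs with h
                · exact div_nonneg (mul_nonneg (hc0 _) (hc0 _)) hbpos.le
                · exact le_refl 0
            · rw [Fintype.sum_sum_type]
              have hT1 : (∑ q, (if g q < 0 then (1 - α / β) * c q else if g q ≤ 0 then c q else 0)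
                    • ww (Sum.inl q)) = Szer + (1 - α / β) • Sneg := by
                rw [hSzer, hSneg, Finset.smul_sum, ← Finset.sum_add_distrib]
                refine Finset.sum_congr rfl fun q _ => ?_
                simp only [hwwdef, Sum.elim_inl]
                rcases lt_trichotomy (g q) 0 with h | h | h
                · simp only [if_pos h, if_pos h.le, h.ne, if_neg, smul_smul]
                  simp [h.ne]
                · simp [h]
                · simp [h, not_lt.2 h.le, not_le.2 h, h.ne']
              have hT2 : (∑ pq : Fin p × Fin p,
                    (if 0 < g pq.1 ∧ g pq.2 < 0 then c pq.1 * c pq.2 / β else 0)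
                    • ww (Sum.inr pq)) = (α / β) • Sneg + Spos := by
                have hptw : ∀ pq : Fin p × Fin p,
                    (if 0 < g pq.1 ∧ g pq.2 < 0 then c pq.1 * c pq.2 / β else 0) • ww (Sum.inr pq)
                    = (if 0 < g pq.1 then c pq.1 * g pq.1 else 0)
                        • (if g pq.2 < 0 then (c pq.2 / β) • w pq.2 else 0)
                      - (if g pq.2 < 0 then c pq.2 * g pq.2 / β else 0)
                        • (if 0 < g pq.1 then c pq.1 • w pq.1 else 0) := by
                  rintro ⟨p₁, q₁⟩
                  simp only [hwwdef, Sum.elim_inr]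
                  by_cases h1' : 0 < g p₁
                  · by_cases h2' : g q₁ < 0
                    · simp only [h1', h2', and_self, if_true, true_and, if_pos]
                      rw [smul_sub, smul_smul, smul_smul, smul_smul, smul_smul]
                      congr 1 <;> congr 1 <;> ring
                    · simp [h2']
                  · simp [h1']
                have e1 : (∑ p₁, ∑ q₁, (if 0 < g p₁ then c p₁ * g p₁ else 0)
                    • (if g q₁ < 0 then (c q₁ / β) • w q₁ else 0))
                    = α • ∑ q₁, (if g q₁ < 0 then (c q₁ / β) • w q₁ else 0) := by
                  simp_rw [← Finset.smul_sum]
                  rw [← Finset.sum_smul, ← hαdef]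
                have e2 : (∑ q₁, (if g q₁ < 0 then (c q₁ / β) • w q₁ else 0))
                    = β⁻¹ • Sneg := by
                  rw [hSneg, Finset.smul_sum]
                  refine Finset.sum_congr rfl fun q _ => ?_
                  split_ifs with h
                  · rw [smul_smul, div_eq_inv_mul]
                  · simp
                have e3 : (∑ p₁, ∑ q₁, (if g q₁ < 0 then c q₁ * g q₁ / β else 0)
                    • (if 0 < g p₁ then c p₁ • w p₁ else 0))
                    = (∑ q₁, (if g q₁ < 0 then c q₁ * g q₁ / β else 0)) • Spos := by
                  rw [Finset.sum_comm]
                  simp_rw [← Finset.smul_sum]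
                  rw [← Finset.sum_smul, ← hSpos]
                have e4 : (∑ q₁, if g q₁ < 0 then c q₁ * g q₁ / β else 0) = -1 := by
                  have ed : (∑ q₁, if g q₁ < 0 then c q₁ * g q₁ / β else 0)
                      = (∑ q₁, if g q₁ < 0 then c q₁ * g q₁ else 0) / β := by
                    rw [Finset.sum_div]
                    refine Finset.sum_congr rfl fun q _ => ?_
                    split_ifs <;> simp
                  have hs : (∑ q₁, if g q₁ < 0 then c q₁ * g q₁ else 0) = -β := by
                    rw [hβdef]; ring
                  rw [ed, hs, neg_div, div_self hb0]
                rw [Finset.sum_congr rfl (fun pq _ => hptw pq)]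
                rw [Finset.sum_sub_distrib]
                rw [Fintype.sum_prod_type, Fintype.sum_prod_type]
                dsimp only
                rw [e1]
                rw [e2]
                rw [e3]
                rw [e4]
                rw [smul_smul, neg_one_smul, sub_neg_eq_add, div_eq_mul_inv]
              simp only [Sum.elim_inl, Sum.elim_inr]
              rw [hT1, hT2, hsplit, sub_smul, one_smul]
              abel
        · rintro ⟨c, hc0, rfl⟩
          intro b hb
          rw [sum_inner]
          exact Finset.sum_nonpos fun s _ => by
            rw [real_inner_smul_left]
            exact mul_nonpos_of_nonneg_of_nonpos (hc0 s) (h1 s b hb)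
      refine ⟨Fintype.card (Fin p ⊕ Fin p × Fin p), ww ∘ (Fintype.equivFin _).symm,
        fun q => h1 _, fun x => (main x).trans ⟨?_, ?_⟩⟩
      · rintro ⟨c, hc, rfl⟩
        exact ⟨c ∘ (Fintype.equivFin _).symm, fun q => hc _,
          (Equiv.sum_comp (Fintype.equivFin _).symm (fun s => c s • ww s)).symm⟩
      · rintro ⟨c, hc, rfl⟩
        refine ⟨c ∘ (Fintype.equivFin _), fun s => hc _, ?_⟩
        rw [← Equiv.sum_comp (Fintype.equivFin (Fin p ⊕ Fin p × Fin p)).symm]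
        simp [Function.comp]

theorem face_dist {N : ℕ} (ν : Fin N → E) (S : Finset (Fin N)) (j : Fin N) :
    ∃ C : ℝ, 0 ≤ C ∧ ∀ x : E, (∀ k ∈ S, ⟪x, ν k⟫ = 0) → (∀ m, ⟪x, ν m⟫ ≤ 0) →
      ∃ z : E, (∀ k ∈ S, ⟪z, ν k⟫ = 0) ∧ (∀ m, ⟪z, ν m⟫ ≤ 0) ∧ ⟪z, ν j⟫ = 0 ∧
        ‖x - z‖ ≤ C * (-⟪x, ν j⟫) := by
  classical
  set l : List E := (Finset.univ.toList.map ν) ++ (S.toList.map ν)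
      ++ (S.toList.map (fun k => -(ν k))) with hl
  obtain ⟨p, w, hwl, hrep⟩ := mw_aux l
  have hmem1 : ∀ m : Fin N, ν m ∈ l := by
    intro m; rw [hl]; simp
  have hmem2 : ∀ k ∈ S, -(ν k) ∈ l := by
    intro k hk; rw [hl]; simp only [List.mem_append, List.mem_map]
    exact Or.inr ⟨k, by simpa using hk, rfl⟩
  have hwle : ∀ q, ∀ m, ⟪w q, ν m⟫ ≤ 0 := fun q m => hwl q (ν m) (hmem1 m)
  have hweq : ∀ q, ∀ k ∈ S, ⟪w q, ν k⟫ = 0 := by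
    intro q k hk
    have h2 := hwl q (-(ν k)) (hmem2 k hk)
    rw [inner_neg_right] at h2
    linarith [hwle q k]
  refine ⟨∑ q, if ⟪w q, ν j⟫ < 0 then ‖w q‖ / (-⟪w q, ν j⟫) else 0,
    Finset.sum_nonneg fun q _ => by
      split_ifs with h
      · exact div_nonneg (norm_nonneg _) (by linarith)
      · exact le_refl 0, ?_⟩
  intro x hxS hxall
  have hxl : ∀ a ∈ l, ⟪x, a⟫ ≤ 0 := by
    intro a ha
    rw [hl] at ha
    simp only [List.mem_append, List.mem_map, Finset.mem_toList] at ha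
    rcases ha with (⟨m, _, rfl⟩ | ⟨k, hk, rfl⟩) | ⟨k, hk, rfl⟩
    · exact hxall m
    · exact hxall k
    · rw [inner_neg_right]; rw [hxS k (by simpa using hk)]; simp
  obtain ⟨c, hc0, hcx⟩ := (hrep x).1 hxl
  set z : E := ∑ q, (if ⟪w q, ν j⟫ = 0 then c q else 0) • w q with hz
  have hδ0 : 0 ≤ -⟪x, ν j⟫ := by linarith [hxall j]
  have hδ : -⟪x, ν j⟫ = ∑ q, c q * (-⟪w q, ν j⟫) := by
    rw [hcx, sum_inner, ← Finset.sum_neg_distrib]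
    refine Finset.sum_congr rfl fun q _ => ?_
    rw [real_inner_smul_left]; ring
  have hcb : ∀ q, ⟪w q, ν j⟫ < 0 → c q ≤ (-⟪x, ν j⟫) / (-⟪w q, ν j⟫) := by
    intro q hq
    rw [le_div_iff₀ (by linarith)]
    calc c q * -⟪w q, ν j⟫ ≤ ∑ r, c r * (-⟪w r, ν j⟫) := by
          refine Finset.single_le_sum (f := fun r => c r * (-⟪w r, ν j⟫))
            (fun r _ => mul_nonneg (hc0 r) (by linarith [hwle r j])) (Finset.mem_univ q)
      _ = -⟪x, ν j⟫ := hδ.symm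
  refine ⟨z, ?_, ?_, ?_, ?_⟩
  · intro k hk
    rw [hz, sum_inner]
    refine Finset.sum_eq_zero fun q _ => ?_
    rw [real_inner_smul_left, hweq q k hk, mul_zero]
  · intro m
    rw [hz, sum_inner]
    refine Finset.sum_nonpos fun q _ => ?_
    rw [real_inner_smul_left]
    refine mul_nonpos_of_nonneg_of_nonpos ?_ (hwle q m)
    split_ifs with h
    · exact hc0 q
    · exact le_refl 0
  · rw [hz, sum_inner]
    refine Finset.sum_eq_zero fun q _ => ?_
    rw [real_inner_smul_left]
    split_ifs with h
    · rw [h, mul_zero]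
    · rw [zero_mul]
  · have hxz : x - z = ∑ q, (if ⟪w q, ν j⟫ = 0 then 0 else c q) • w q := by
      rw [hcx, hz, ← Finset.sum_sub_distrib]
      refine Finset.sum_congr rfl fun q _ => ?_
      split_ifs with h <;> simp
    rw [hxz]
    calc ‖∑ q, (if ⟪w q, ν j⟫ = 0 then 0 else c q) • w q‖
        ≤ ∑ q, ‖(if ⟪w q, ν j⟫ = 0 then 0 else c q) • w q‖ := norm_sum_le _ _
      _ ≤ ∑ q, (if ⟪w q, ν j⟫ < 0 then ‖w q‖ / (-⟪w q, ν j⟫) else 0) * (-⟪x, ν j⟫) := by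
          refine Finset.sum_le_sum fun q _ => ?_
          rw [norm_smul]
          by_cases h : ⟪w q, ν j⟫ = 0
          · have h' : ¬(⟪w q, ν j⟫ < 0) := by rw [h]; exact lt_irrefl 0
            simp only [if_pos h, if_neg h']
            simp
          · have hlt : ⟪w q, ν j⟫ < 0 := lt_of_le_of_ne (hwle q j) h
            rw [if_neg h, if_pos hlt, Real.norm_eq_abs, abs_of_nonneg (hc0 q)]
            rw [div_mul_eq_mul_div, mul_comm (‖w q‖)]
            rw [mul_comm (c q)]
            calc ‖w q‖ * c q ≤ ‖w q‖ * ((-⟪x, ν j⟫) / (-⟪w q, ν j⟫)) :=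
                  mul_le_mul_of_nonneg_left (hcb q hlt) (norm_nonneg _)
              _ = (-⟪x, ν j⟫) * ‖w q‖ / (-⟪w q, ν j⟫) := by ring
      _ = (∑ q, if ⟪w q, ν j⟫ < 0 then ‖w q‖ / (-⟪w q, ν j⟫) else 0) * (-⟪x, ν j⟫) :=
          (Finset.sum_mul _ _ _).symm
/-- The `k`-th stratum (for `k : ℤ`, with `k = -1` giving `∅`) of the polyhedral cone
domain `⋂ j, {x | ⟪x, ν j⟫ ≤ 0}`: points `x` of the domain such that the linear subspace
`⋂_{j : ⟪x, ν j⟫ = 0} ∂H_j` has dimension at most `k`. -/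
noncomputable def stratumLE (n N : ℕ) (ν : Fin N → EuclideanSpace ℝ (Fin (n + 1)))
    (k : ℤ) : Set (EuclideanSpace ℝ (Fin (n + 1))) :=
  {x | (∀ j, ⟪x, ν j⟫ ≤ 0) ∧
    (Module.finrank ℝ
      ↥(⨅ j ∈ {j : Fin N | ⟪x, ν j⟫ = 0}, (Submodule.span ℝ {ν j})ᗮ) : ℤ) ≤ k}

theorem stratum_lower {n N : ℕ} (ν : Fin N → EuclideanSpace ℝ (Fin (n + 1))) (i : ℤ)
    (x z : EuclideanSpace ℝ (Fin (n + 1))) (j : Fin N)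
    (hx : x ∈ stratumLE n N ν i) (hxj : ⟪x, ν j⟫ ≠ 0)
    (hz1 : ∀ m, ⟪z, ν m⟫ ≤ 0) (hz2 : ∀ k, ⟪x, ν k⟫ = 0 → ⟪z, ν k⟫ = 0)
    (hz3 : ⟪z, ν j⟫ = 0) :
    z ∈ stratumLE n N ν (i - 1) := by
  obtain ⟨hx1, hx2⟩ := hx
  refine ⟨hz1, ?_⟩
  set W := ⨅ k ∈ {k : Fin N | ⟪x, ν k⟫ = 0}, (Submodule.span ℝ {ν k})ᗮ with hW
  have hsub : (⨅ k ∈ {k : Fin N | ⟪z, ν k⟫ = 0}, (Submodule.span ℝ {ν k})ᗮ)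
      ≤ (Submodule.span ℝ {ν j})ᗮ ⊓ W := by
    refine le_inf (iInf₂_le j hz3) ?_
    rw [hW]
    exact biInf_mono hz2
  have hxW : x ∈ W := by
    rw [hW]
    simp only [Submodule.mem_iInf]
    intro k hk
    rw [Submodule.mem_orthogonal_singleton_iff_inner_right, real_inner_comm]
    exact hk
  have hxnW : x ∉ (Submodule.span ℝ {ν j})ᗮ ⊓ W := by
    intro hmem
    have h' := (Submodule.mem_inf.1 hmem).1
    rw [Submodule.mem_orthogonal_singleton_iff_inner_right, real_inner_comm] at h'
    exact hxj h'
  have hlt : (Submodule.span ℝ {ν j})ᗮ ⊓ W < W := by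
    refine lt_of_le_of_ne inf_le_right fun he => hxnW ?_
    rw [he]; exact hxW
  have hfr1 : Module.finrank ℝ ((Submodule.span ℝ {ν j})ᗮ ⊓ W : Submodule ℝ _)
      < Module.finrank ℝ W := Submodule.finrank_lt_finrank_of_lt hlt
  have hfr2 : Module.finrank ℝ (⨅ k ∈ {k : Fin N | ⟪z, ν k⟫ = 0},
      (Submodule.span ℝ {ν k})ᗮ : Submodule ℝ _)
      ≤ Module.finrank ℝ ((Submodule.span ℝ {ν j})ᗮ ⊓ W : Submodule ℝ _) :=
    Submodule.finrank_mono hsub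
  omega


/-- There is a constant `B ∈ (0, 1/4)` such that for every `i`, every
`x ∈ ∂_iΩ`, and every `y` with `|y − x| < 2B·dist(x, ∂_{i−1}Ω)` (distance to `∅` being
`+∞`), one has `y ∈ Ω ↔ y − x ∈ T_xΩ`. -/
theorem stmt_2 (n N : ℕ) (ν : Fin N → EuclideanSpace ℝ (Fin (n + 1)))
    (hν : ∀ j, ‖ν j‖ = 1)
    (Ω : Set (EuclideanSpace ℝ (Fin (n + 1))))
    (hΩ : Ω = ⋂ j, {x : EuclideanSpace ℝ (Fin (n + 1)) | ⟪x, ν j⟫ ≤ 0})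
    (hint : (interior Ω).Nonempty) :
    ∃ B : ℝ, 0 < B ∧ B < 1 / 4 ∧
      ∀ i : ℕ, i ≤ n + 1 →
        ∀ x ∈ stratumLE n N ν (i : ℤ), ∀ y : EuclideanSpace ℝ (Fin (n + 1)),
          edist y x < ENNReal.ofReal (2 * B) *
              EMetric.infEdist x (stratumLE n N ν ((i : ℤ) - 1)) →
          (y ∈ Ω ↔ ∀ j, ⟪x, ν j⟫ = 0 → ⟪y - x, ν j⟫ ≤ 0) := by
  classical
  choose C hC0 hCspec using fun (Sj : Finset (Fin N) × Fin N) => face_dist ν Sj.1 Sj.2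
  set Cm : ℝ := ∑ Sj : Finset (Fin N) × Fin N, C Sj with hCm
  have hCm0 : 0 ≤ Cm := Finset.sum_nonneg fun Sj _ => hC0 Sj
  have hCle : ∀ Sj, C Sj ≤ Cm := fun Sj =>
    Finset.single_le_sum (fun r _ => hC0 r) (Finset.mem_univ Sj)
  have hCm1 : (0:ℝ) < Cm + 1 := by linarith
  set B : ℝ := min (1/8) (1/(2*(Cm+1))) with hB
  have hBpos : 0 < B := lt_min (by norm_num) (div_pos one_pos (by linarith))
  refine ⟨B, hBpos, lt_of_le_of_lt (min_le_left _ _) (by norm_num), ?_⟩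
  intro i _ x hx y hy
  obtain ⟨hx1, hx2⟩ := hx
  constructor
  · intro hyΩ j hj
    have hyj : ⟪y, ν j⟫ ≤ 0 := by
      rw [hΩ] at hyΩ
      exact Set.mem_iInter.1 hyΩ j
    rw [inner_sub_left, hj]
    linarith
  · intro hT
    rw [hΩ, Set.mem_iInter]
    intro j
    show ⟪y, ν j⟫ ≤ 0
    by_cases hj : ⟪x, ν j⟫ = 0
    · have h' := hT j hj
      rw [inner_sub_left, hj] at h'
      linarith
    · set S : Finset (Fin N) := Finset.univ.filter (fun k => ⟪x, ν k⟫ = 0) with hS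
      obtain ⟨z, hz1, hz2, hz3, hz4⟩ := hCspec (S, j) x
        (fun k hk => (Finset.mem_filter.1 hk).2) hx1
      have hzmem : z ∈ stratumLE n N ν ((i:ℤ) - 1) :=
        stratum_lower ν i x z j ⟨hx1, hx2⟩ hj hz2
          (fun k hk => hz1 k (Finset.mem_filter.2 ⟨Finset.mem_univ k, hk⟩)) hz3
      have hδpos : 0 < -⟪x, ν j⟫ := by
        have := lt_of_le_of_ne (hx1 j) hj
        linarith
      have hinf : EMetric.infEdist x (stratumLE n N ν ((i:ℤ)-1))
          ≤ ENNReal.ofReal (C (S,j) * (-⟪x, ν j⟫)) := by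
        refine le_trans (EMetric.infEdist_le_edist_of_mem hzmem) ?_
        rw [edist_dist]
        exact ENNReal.ofReal_le_ofReal (by rw [dist_eq_norm]; exact hz4)
      have hyd : dist y x < 2 * B * (C (S,j) * (-⟪x, ν j⟫)) := by
        have h2 : edist y x < ENNReal.ofReal (2*B) *
            ENNReal.ofReal (C (S,j) * (-⟪x, ν j⟫)) :=
          lt_of_lt_of_le hy (mul_le_mul_right hinf _)
        rw [← ENNReal.ofReal_mul (by positivity)] at h2
        exact edist_lt_ofReal.1 h2
      have hBC : 2 * B * C (S,j) ≤ 1 := by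
        have hB2 : B ≤ 1/(2*(Cm+1)) := min_le_right _ _
        have hB3 : B * (2*(Cm+1)) ≤ 1 := by
          rw [le_div_iff₀ (by linarith)] at hB2
          linarith
        nlinarith [hCle (S,j), hC0 (S,j), hBpos.le]
      have hkey : dist y x < -⟪x, ν j⟫ := by
        nlinarith [mul_le_mul_of_nonneg_right hBC hδpos.le]
      have hCS : ⟪y - x, ν j⟫ ≤ ‖y - x‖ * ‖ν j‖ := real_inner_le_norm _ _
      rw [hν j, mul_one] at hCS
      have hn : ‖y - x‖ = dist y x := (dist_eq_norm y x).symm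
      have hyx : ⟪y, ν j⟫ = ⟪x, ν j⟫ + ⟪y - x, ν j⟫ := by
        rw [inner_sub_left]; ring
      rw [hyx]
      rw [hn] at hCS
      linarith
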